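/- Let f : X' → T' be a proper morphism of schemes, let T ⊆ T' be an open subscheme, and let X ⊆ X' be an open subscheme whose image under f is contained in T and which is topologically dense in X'. If the induced morphism X → T is proper, then X is exactly the preimage of T under f; that is, the commutative square formed by the open immersions X → X' and T → T' together with the morphisms X → T and f : X' → T' is Cartesian. -/

import Mathlib

open AlgebraicGeometry CategoryTheory CategoryTheory.Limits

lemma aux_hasOfPostcomp :
    MorphismProperty.HasOfPostcompProperty @UniversallyClosed @AlgebraicGeometry.IsSeparated := by
  infer_instance

/-- Let `f : X' ⟶ T'` be a proper morphism of schemes, `iT : T ⟶ T'` an open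
immersion (an open subscheme), and `iX : X ⟶ X'` an open immersion whose image under `f` lands
in `T` (witnessed by the morphism `g : X ⟶ T` with `iX ≫ f = g ≫ iT`) and which is
topologically dense in `X'`.  If the induced morphism `g : X ⟶ T` is proper, then the
commutative square is Cartesian, i.e. `X` is exactly the preimage of `T` under `f`. -/
theorem stmt0 {X X' T T' : Scheme} (f : X' ⟶ T') (g : X ⟶ T) (iX : X ⟶ X') (iT : T ⟶ T')
    [IsOpenImmersion iX] [IsOpenImmersion iT] [IsProper f] [IsProper g]
    (hcomm : iX ≫ f = g ≫ iT) (hdense : DenseRange iX.base) :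
    IsPullback iX g f iT := by
  let P := pullback f iT
  let h : X ⟶ P := pullback.lift iX g hcomm
  have hfst : h ≫ pullback.fst f iT = iX := pullback.lift_fst _ _ _
  have hsnd : h ≫ pullback.snd f iT = g := pullback.lift_snd _ _ _
  -- `h` is an open immersion
  have hOI : IsOpenImmersion h := by
    have : IsOpenImmersion (h ≫ pullback.fst f iT) := hfst ▸ inferInstance
    exact IsOpenImmersion.of_comp h (pullback.fst f iT)
  -- `h` is universally closed
  have hSep : AlgebraicGeometry.IsSeparated (pullback.snd f iT) :=
    inferInstance
  have hUC : UniversallyClosed h := by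
    have := aux_hasOfPostcomp
    refine MorphismProperty.of_postcomp (W := @UniversallyClosed)
      (W' := @AlgebraicGeometry.IsSeparated) h (pullback.snd f iT) hSep ?_
    rw [hsnd]; infer_instance
  -- `h` has dense range
  have hinj : Function.Injective (pullback.fst f iT).base :=
    (pullback.fst f iT).isOpenEmbedding.injective
  have hrange : Set.range h.base = (pullback.fst f iT).base ⁻¹' Set.range iX.base := by
    ext p
    constructor
    · rintro ⟨x, rfl⟩
      exact ⟨x, by rw [← hfst, Scheme.Hom.comp_apply]⟩
    · rintro ⟨x, hx⟩
      refine ⟨x, hinj ?_⟩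
      rw [← Scheme.Hom.comp_apply, hfst, hx]
  have hdenseh : DenseRange h.base := by
    intro p
    have hopen : IsOpenMap (pullback.fst f iT).base :=
      (pullback.fst f iT).isOpenEmbedding.isOpenMap
    have := hopen.preimage_closure_subset_closure_preimage
      (s := Set.range iX.base)
    have hp : p ∈ (pullback.fst f iT).base ⁻¹' closure (Set.range iX.base) := by
      simp [hdense.closure_range]
    rw [hrange]
    exact this hp
  -- `h` is surjective, hence an isomorphism
  have hclosed : IsClosed (Set.range h.base) := by
    have := h.isClosedMap Set.univ isClosed_univ
    simpa [Set.image_univ] using this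
  have hsurj : Function.Surjective h.base :=
    Set.range_eq_univ.mp (hclosed.closure_eq ▸ hdenseh.closure_range)
  have hiso : IsIso h := by
    rw [isIso_iff_isOpenImmersion_and_epi_base]
    exact ⟨hOI, (TopCat.epi_iff_surjective _).mpr hsurj⟩
  exact IsPullback.of_iso_pullback ⟨hcomm⟩ (asIso h) hfst hsnd
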